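/- For every n ≥ 0, max{ r(n,k+1) − r(n,k) : 0 ≤ k < 2^n } = 1/(n+1); that is, the largest gap between consecutive level-n Stern–Brocot fractions equals 1/(n+1). -/

import Mathlib

/-- Stern–Brocot (Farey mediant) array: `sternBrocot n k = (p(n,k), q(n,k))`,
with `p(0,0)=0, p(0,1)=1, q(0,0)=q(0,1)=1`, `(p,q)(n+1,2k)=(p,q)(n,k)` and
`(p,q)(n+1,2k+1)=(p,q)(n,k)+(p,q)(n,k+1)`. -/
def sternBrocot : ℕ → ℕ → ℕ × ℕ
  | 0, 0 => (0, 1)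
  | 0, _ => (1, 1)
  | n + 1, k =>
    if k % 2 = 0 then sternBrocot n (k / 2)
    else
      ((sternBrocot n (k / 2)).1 + (sternBrocot n (k / 2 + 1)).1,
       (sternBrocot n (k / 2)).2 + (sternBrocot n (k / 2 + 1)).2)

/-- Numerator `p(n,k)`. -/
def sbp (n k : ℕ) : ℕ := (sternBrocot n k).1

/-- Denominator `q(n,k)`. -/
def sbq (n k : ℕ) : ℕ := (sternBrocot n k).2

/-- The largest gap between consecutive level-`n` Stern–Brocot fractions
equals `1/(n+1)`:
`max { r(n,k+1) − r(n,k) : 0 ≤ k < 2^n } = 1/(n+1)`. -/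
lemma sb_even (n k : ℕ) : sternBrocot (n+1) (2*k) = sternBrocot n k := by
  simp [sternBrocot, Nat.mul_mod_right, Nat.mul_div_cancel_left]

lemma sb_odd (n k : ℕ) : sternBrocot (n+1) (2*k+1) =
    ((sternBrocot n k).1 + (sternBrocot n (k+1)).1,
     (sternBrocot n k).2 + (sternBrocot n (k+1)).2) := by
  have h1 : (2*k+1) % 2 = 1 := by omega
  have h2 : (2*k+1) / 2 = k := by omega
  simp [sternBrocot, h1, h2]

lemma sbq_pos : ∀ n k, 0 < sbq n k
  | 0, 0 => one_pos
  | 0, _+1 => one_pos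
  | n+1, k => by
    unfold sbq sternBrocot
    split
    · exact sbq_pos n (k/2)
    · exact Nat.add_pos_left (sbq_pos n (k/2)) _

lemma sbp_zero : ∀ n, sbp n 0 = 0
  | 0 => rfl
  | n+1 => by
    have := sb_even n 0
    simp only [mul_zero] at this
    simp only [sbp, this]
    exact sbp_zero n

lemma sbq_zero : ∀ n, sbq n 0 = 1
  | 0 => rfl
  | n+1 => by
    have := sb_even n 0
    simp only [mul_zero] at this
    simp only [sbq, this]
    exact sbq_zero n

lemma sbp_one : ∀ n, sbp n 1 = 1
  | 0 => rfl
  | n+1 => by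
    have := sb_odd n 0
    simp only [mul_zero, zero_add] at this
    have h0 := sbp_zero n
    have h1 := sbp_one n
    simp only [sbp] at h0 h1 ⊢
    rw [this]; dsimp; omega

lemma sbq_one : ∀ n, sbq n 1 = n + 1
  | 0 => rfl
  | n+1 => by
    have := sb_odd n 0
    simp only [mul_zero, zero_add] at this
    have h0 : sbq n 0 = 1 := sbq_zero n
    have h1 : sbq n 1 = n + 1 := sbq_one n
    simp only [sbq] at h0 h1 ⊢
    rw [this]; simp; omega

lemma sb_det : ∀ n k, k < 2^n → sbp n (k+1) * sbq n k = sbp n k * sbq n (k+1) + 1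
  | 0, 0, _ => rfl
  | 0, k+1, h => by simp [pow_zero] at h
  | n+1, k, h => by
    rcases Nat.even_or_odd k with ⟨m, hm⟩ | ⟨m, hm⟩
    · subst hm
      have hm' : m < 2^n := by rw [pow_succ] at h; omega
      have ih := sb_det n m hm'
      have he := sb_even n m
      have ho := sb_odd n m
      simp only [sbp, sbq, two_mul] at *
      rw [show m+m+1 = 2*m+1 by ring, show m+m = 2*m by ring] at *
      rw [he, ho]
      dsimp
      nlinarith [ih]
    · subst hm
      have hm' : m + 1 ≤ 2^n := by rw [pow_succ] at h; omega
      have hm'' : m < 2^n := hm'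
      have ih := sb_det n m hm''
      have he := sb_even n (m+1)
      have ho := sb_odd n m
      simp only [sbp, sbq] at *
      rw [show 2*m+1+1 = 2*(m+1) by ring] at *
      rw [he, ho]
      dsimp
      nlinarith [ih]

lemma sb_sum : ∀ n k, k < 2^n → n + 2 ≤ sbq n k + sbq n (k+1)
  | 0, 0, _ => le_refl _
  | 0, k+1, h => by simp [pow_zero] at h
  | n+1, k, h => by
    rcases Nat.even_or_odd k with ⟨m, hm⟩ | ⟨m, hm⟩
    · subst hm
      have hm' : m < 2^n := by rw [pow_succ] at h; omega
      have ih := sb_sum n m hm'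
      have hp := sbq_pos n m
      have he := sb_even n m
      have ho := sb_odd n m
      simp only [sbq, two_mul] at *
      rw [show m+m+1 = 2*m+1 by ring, show m+m = 2*m by ring] at *
      rw [he, ho]
      dsimp
      omega
    · subst hm
      have hm' : m < 2^n := by rw [pow_succ] at h; omega
      have ih := sb_sum n m hm'
      have hp := sbq_pos n (m+1)
      have he := sb_even n (m+1)
      have ho := sb_odd n m
      simp only [sbq] at *
      rw [show 2*m+1+1 = 2*(m+1) by ring] at *
      rw [he, ho]
      dsimp
      omega

theorem sternBrocot_max_gap (n : ℕ) :
    IsGreatest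
      {d : ℚ | ∃ k < 2 ^ n,
        d = (sbp n (k + 1) : ℚ) / (sbq n (k + 1) : ℚ) - (sbp n k : ℚ) / (sbq n k : ℚ)}
      (1 / ((n : ℚ) + 1)) := by
  constructor
  · refine ⟨0, (Nat.pow_pos (by norm_num) : 0 < 2 ^ n) |>.trans_le (le_refl _), ?_⟩
    rw [sbp_zero, sbq_zero, sbp_one, sbq_one]
    push_cast
    ring
  · rintro d ⟨k, hk, rfl⟩
    have hdet := sb_det n k hk
    have hq := sbq_pos n k
    have hq' := sbq_pos n (k+1)
    have hsum := sb_sum n k hk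
    have hqQ : (0:ℚ) < (sbq n k : ℚ) := by exact_mod_cast hq
    have hq'Q : (0:ℚ) < (sbq n (k+1) : ℚ) := by exact_mod_cast hq'
    have hdetQ : (sbp n (k+1) : ℚ) * (sbq n k : ℚ) = (sbp n k : ℚ) * (sbq n (k+1) : ℚ) + 1 := by
      exact_mod_cast hdet
    have heq : (sbp n (k + 1) : ℚ) / (sbq n (k + 1) : ℚ) - (sbp n k : ℚ) / (sbq n k : ℚ)
        = 1 / ((sbq n k : ℚ) * (sbq n (k+1) : ℚ)) := by
      rw [div_sub_div _ _ hq'Q.ne' hqQ.ne', mul_comm ((sbq n (k+1)):ℚ)]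
      congr 1
      · linarith
      · ring
    rw [heq]
    have hprod : n + 1 ≤ sbq n k * sbq n (k+1) := by nlinarith
    have hprodQ : ((n:ℚ) + 1) ≤ (sbq n k : ℚ) * (sbq n (k+1) : ℚ) := by exact_mod_cast hprod
    apply one_div_le_one_div_of_le (by positivity) hprodQ
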